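/- arXiv:2402.05006 — 2 statements merged into one kernel-verified Lean document; each statement's English description precedes it below -/
import Mathlib

section
/- Let G be a finite signed graph whose maximum vertex degree Δ (in the underlying graph with edge set E⁺ ∪ E⁻) satisfies Δ ≥ 1. Suppose G₁ = G[V₁] is an induced subgraph of G that is balanced and has the maximum number of vertices among all balanced induced subgraphs of G, and G₂ = G[V₂] is an induced subgraph of G that is balanced and has the maximum number of edges among all balanced induced subgraphs of G. Then |V₂| ≥ |V₁| / Δ; that is, the solution to the edge-maximization problem MBS-E is a (1/Δ)-approximation for the vertex-maximization problem MBS-V. -/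
noncomputable section

/-- A finite signed graph: disjoint finite sets of positive and negative
edges (unordered pairs of distinct vertices) on a vertex type `V`. -/
structure SignedGraph (V : Type*) where
  Epos : Set (Sym2 V)
  Eneg : Set (Sym2 V)
  finite : (Epos ∪ Eneg).Finite
  disj : Disjoint Epos Eneg
  loopless : ∀ e ∈ Epos ∪ Eneg, ¬ e.IsDiag

namespace SignedGraph

variable {V : Type*}

/-- The set of all edges `E⁺ ∪ E⁻`. -/
def edges (G : SignedGraph V) : Set (Sym2 V) := G.Epos ∪ G.Eneg

/-- `|E⁺ ∪ E⁻|`, the number of edges. -/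
def numEdges (G : SignedGraph V) : ℕ := G.edges.ncard

/-- The underlying (unsigned) simple graph. -/
def underlying (G : SignedGraph V) : SimpleGraph V :=
  SimpleGraph.fromEdgeSet G.edges

/-- A signed graph is connected if its underlying simple graph is connected. -/
def Connected (G : SignedGraph V) : Prop := G.underlying.Connected

/-- An edge is frustrated under a coloring `x : V → Bool` if it is positive and
its endpoints receive different colors, or negative and its endpoints receive
the same color. -/
def IsFrustrated (G : SignedGraph V) (x : V → Bool) (e : Sym2 V) : Prop :=
  (e ∈ G.Epos ∧ ∀ a b, e = s(a, b) → x a ≠ x b) ∨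
  (e ∈ G.Eneg ∧ ∀ a b, e = s(a, b) → x a = x b)

/-- The set of edges frustrated under the coloring `x`. -/
def frustratedEdges (G : SignedGraph V) (x : V → Bool) : Set (Sym2 V) :=
  {e | G.IsFrustrated x e}

/-- `f(G,x)`: the number of edges frustrated under the coloring `x`. -/
def frustCount (G : SignedGraph V) (x : V → Bool) : ℕ :=
  (G.frustratedEdges x).ncard

/-- A signed graph is balanced if it is connected and the vertices can be
partitioned into two classes (the fibers of a two-coloring) so that every
positive edge joins vertices in the same class and every negative edge joins
vertices in different classes. -/
def Balanced (G : SignedGraph V) : Prop :=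
  G.Connected ∧ ∃ x : V → Bool,
    (∀ e ∈ G.Epos, ∀ a b, e = s(a, b) → x a = x b) ∧
    (∀ e ∈ G.Eneg, ∀ a b, e = s(a, b) → x a ≠ x b)

/-- Delete a set `F` of edges from a signed graph. -/
def deleteEdges (G : SignedGraph V) (F : Set (Sym2 V)) : SignedGraph V where
  Epos := G.Epos \ F
  Eneg := G.Eneg \ F
  finite := G.finite.subset (Set.union_subset_union Set.diff_subset Set.diff_subset)
  disj := G.disj.mono Set.diff_subset Set.diff_subset
  loopless := fun e he =>
    G.loopless e (Set.union_subset_union Set.diff_subset Set.diff_subset he)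

/-- The induced signed subgraph on a set `S` of vertices. -/
def induce (G : SignedGraph V) (S : Set V) : SignedGraph S where
  Epos := {e : Sym2 S | e.map Subtype.val ∈ G.Epos}
  Eneg := {e : Sym2 S | e.map Subtype.val ∈ G.Eneg}
  finite := by
    have h : {e : Sym2 S | e.map Subtype.val ∈ G.Epos} ∪
        {e : Sym2 S | e.map Subtype.val ∈ G.Eneg} =
        Sym2.map (Subtype.val : S → V) ⁻¹' (G.Epos ∪ G.Eneg) := by
      ext e; simp [Set.mem_union, Set.mem_preimage]
    rw [h]
    exact G.finite.preimage ((Sym2.map.injective Subtype.val_injective).injOn)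
  disj := by
    rw [Set.disjoint_left]
    intro e he₁ he₂
    exact Set.disjoint_left.mp G.disj he₁ he₂
  loopless := by
    intro e he hdiag
    have hmem : e.map (Subtype.val : S → V) ∈ G.Epos ∪ G.Eneg := by
      rcases he with h | h
      · exact Or.inl h
      · exact Or.inr h
    apply G.loopless _ hmem
    induction e using Sym2.ind with
    | _ a b =>
      rw [Sym2.mk_isDiag_iff] at hdiag
      rw [Sym2.map_pair_eq, Sym2.mk_isDiag_iff]
      exact congrArg _ hdiag

/-- Every connected component of the signed graph is balanced (as the induced
signed subgraph on the component's vertex set). -/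
def ComponentsBalanced (G : SignedGraph V) : Prop :=
  ∀ c : G.underlying.ConnectedComponent, (G.induce c.supp).Balanced

/-- The frustration index `L(G)`: the minimum number of edges whose deletion
makes every connected component of the remaining graph balanced. -/
def frustrationIndex (G : SignedGraph V) : ℕ :=
  sInf {k | ∃ F ⊆ G.edges, F.ncard = k ∧ (G.deleteEdges F).ComponentsBalanced}

/-- The Tolerant Balance Index `Φ(G, β) = |E⁺ ∪ E⁻| − L(G)/β`. -/
def TBI (G : SignedGraph V) (β : ℝ) : ℝ :=
  (G.numEdges : ℝ) - (G.frustrationIndex : ℝ) / β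

/-- The Tolerant Balance Count `Φ̂(G, β, x) = |E⁺ ∪ E⁻| − f(G,x)/β`. -/
def TBC (G : SignedGraph V) (β : ℝ) (x : V → Bool) : ℝ :=
  (G.numEdges : ℝ) - (G.frustCount x : ℝ) / β

/-- `G` is balanced under `β`-tolerance: `G` is connected and
`L(G) ≤ β·|E⁺ ∪ E⁻|`. -/
def BalancedWithTolerance (G : SignedGraph V) (β : ℝ) : Prop :=
  G.Connected ∧ (G.frustrationIndex : ℝ) ≤ β * (G.numEdges : ℝ)

end SignedGraph

/-- The degree of a vertex in the underlying graph: the number of edges of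
`E⁺ ∪ E⁻` containing it. -/
def SignedGraph.degree {V : Type*} (G : SignedGraph V) (v : V) : ℕ :=
  {e ∈ G.edges | v ∈ e}.ncard

section Aux

open SimpleGraph

private lemma ncard_eq_fintypeCard' {α : Type*} (s : Set α) [Fintype s] :
    s.ncard = Fintype.card s := by
  rw [Set.ncard_eq_toFinset_card', Set.toFinset_card]

/-- A finite connected simple graph on `n` vertices has at least `n - 1` edges. -/
private lemma conn_card_le_edges {W : Type*} [Fintype W] (H : SimpleGraph W)
    [Fintype H.edgeSet] (h : H.Connected) :
    Fintype.card W ≤ H.edgeFinset.card + 1 := by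
  classical
  obtain ⟨r⟩ := h.nonempty
  have key : ∀ v : W, v ≠ r → ∃ u : W, H.Adj v u ∧ H.dist r u + 1 = H.dist r v := by
    intro v hv
    obtain ⟨p, hp⟩ := h.exists_walk_length_eq_dist r v
    have hd : H.dist r v ≠ 0 := fun h0 => hv ((h.dist_eq_zero_iff).mp h0).symm
    obtain ⟨u, hadj, q, hq⟩ := Walk.exists_eq_cons_of_ne hv p.reverse
    have hlen : q.length + 1 = H.dist r v := by
      have := congrArg Walk.length hq
      simp only [Walk.length_reverse, Walk.length_cons] at this
      omega
    have h1 : H.dist r u ≤ q.length := by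
      have := dist_le q.reverse
      simpa using this
    have h2 : H.dist r v ≤ H.dist r u + 1 := by
      obtain ⟨p', hp'⟩ := h.exists_walk_length_eq_dist r u
      have := dist_le (p'.concat hadj.symm)
      rwa [Walk.length_concat, hp'] at this
    exact ⟨u, hadj, by omega⟩
  choose f hadj hdist using key
  have hcard : (Finset.univ.erase r).card ≤ H.edgeFinset.card := by
    apply Finset.card_le_card_of_injOn
      (fun v => if hv : v = r then s(r, r) else s(v, f v hv))
    · intro v hv
      have hv' : v ≠ r := Finset.ne_of_mem_erase hv
      show (if hv : v = r then s(r, r) else s(v, f v hv)) ∈ H.edgeFinset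
      rw [dif_neg hv']
      rw [mem_edgeFinset, mem_edgeSet]
      exact hadj v hv'
    · intro v hv w hw he
      have hv' : v ≠ r := Finset.ne_of_mem_erase hv
      have hw' : w ≠ r := Finset.ne_of_mem_erase hw
      simp only [dif_neg hv', dif_neg hw'] at he
      rw [Sym2.eq_iff] at he
      rcases he with ⟨h1, _⟩ | ⟨h1, h2⟩
      · exact h1
      · exfalso
        have d1 := hdist v hv'
        have d2 := hdist w hw'
        rw [h2] at d1
        rw [← h1] at d2
        omega
  have : Fintype.card W = (Finset.univ.erase r).card + 1 := by
    rw [Finset.card_erase_of_mem (Finset.mem_univ r), Finset.card_univ]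
    have : 1 ≤ Fintype.card W := Fintype.card_pos_iff.mpr ⟨r⟩
    omega
  omega

namespace SignedGraph

variable {V : Type*}

private lemma edgeSet_underlying (G : SignedGraph V) :
    G.underlying.edgeSet = G.edges := by
  rw [underlying, edgeSet_fromEdgeSet]
  ext e
  simp only [Set.mem_diff, Set.mem_setOf_eq]
  exact ⟨fun h => h.1, fun h => ⟨h, G.loopless e h⟩⟩

private lemma induce_edges (G : SignedGraph V) (S : Set V) :
    (G.induce S).edges = {e : Sym2 S | e.map Subtype.val ∈ G.edges} := by
  ext e
  simp [edges, induce, Set.mem_union]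

/-- A balanced induced subgraph has at least `|S| - 1` edges. -/
private lemma card_le_numEdges [Fintype V] (G : SignedGraph V) (S : Set V)
    (h : (G.induce S).Balanced) : S.ncard ≤ (G.induce S).numEdges + 1 := by
  classical
  haveI : Fintype S := Fintype.ofFinite _
  haveI : Fintype (G.induce S).underlying.edgeSet :=
    Set.Finite.fintype (by rw [edgeSet_underlying]; exact (G.induce S).finite)
  have hb := conn_card_le_edges _ h.1
  have h1 : S.ncard = Fintype.card S := ncard_eq_fintypeCard' S
  have h2 : (G.induce S).numEdges = (G.induce S).underlying.edgeFinset.card := by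
    rw [numEdges, ← edgeSet_underlying, ncard_eq_fintypeCard', edgeFinset_card]
  omega

/-- Handshake bound: twice the edge count of an induced subgraph is at most
`Δ` times the number of vertices. -/
private lemma twice_numEdges_le [Fintype V] (G : SignedGraph V) (S : Set V)
    {Δ : ℕ} (hΔ : ∀ v, G.degree v ≤ Δ) :
    2 * (G.induce S).numEdges ≤ Δ * S.ncard := by
  classical
  haveI : Fintype S := Fintype.ofFinite _
  set H := (G.induce S).underlying with hH
  haveI : DecidableRel H.Adj := Classical.decRel _
  have hsum := H.sum_degrees_eq_twice_card_edges
  have hdeg : ∀ v : S, H.degree v ≤ Δ := by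
    intro v
    have h1 : H.degree v = (H.incidenceSet v).ncard := by
      rw [← card_incidenceSet_eq_degree, ncard_eq_fintypeCard']
    have hsub : Sym2.map (Subtype.val : S → V) '' (H.incidenceSet v) ⊆
        {e ∈ G.edges | (v : V) ∈ e} := by
      rintro e ⟨e', ⟨he', hv⟩, rfl⟩
      constructor
      · rw [hH, edgeSet_underlying, induce_edges] at he'
        exact he'
      · exact Sym2.mem_map.mpr ⟨v, hv, rfl⟩
    have hinj : Function.Injective (Sym2.map (Subtype.val : S → V)) :=
      Sym2.map.injective Subtype.val_injective
    have h2 : (H.incidenceSet v).ncard ≤ {e ∈ G.edges | (v : V) ∈ e}.ncard := by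
      rw [← Set.ncard_image_of_injective _ hinj]
      exact Set.ncard_le_ncard hsub (G.finite.subset (Set.sep_subset _ _))
    rw [h1]
    exact h2.trans (hΔ v)
  have hsumle : ∑ v : S, H.degree v ≤ Δ * Fintype.card S := by
    calc ∑ v : S, H.degree v ≤ ∑ _v : S, Δ := Finset.sum_le_sum fun v _ => hdeg v
      _ = Fintype.card S * Δ := by rw [Finset.sum_const, Finset.card_univ, smul_eq_mul]
      _ = Δ * Fintype.card S := Nat.mul_comm _ _
  have h2 : (G.induce S).numEdges = H.edgeFinset.card := by
    have he : (G.induce S).edges = H.edgeSet := (edgeSet_underlying _).symm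
    rw [numEdges, he, ncard_eq_fintypeCard', edgeFinset_card]
  rw [h2, ← hsum, ncard_eq_fintypeCard']
  exact hsumle

end SignedGraph

end Aux

/-- If `Δ ≥ 1` is the maximum vertex degree of a finite signed
graph `G`, `G[V₁]` is a balanced induced subgraph with the maximum number of
vertices, and `G[V₂]` is a balanced induced subgraph with the maximum number of
edges, then `|V₂| ≥ |V₁|/Δ`: the MBS-E optimum is a `(1/Δ)`-approximation for
MBS-V. -/
theorem SignedGraph.mbsE_approx_mbsV {V : Type*} [Fintype V] (G : SignedGraph V)
    (Δ : ℕ) (hΔmax : IsGreatest (Set.range G.degree) Δ) (hΔ : 1 ≤ Δ)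
    (V₁ V₂ : Set V)
    (h₁bal : (G.induce V₁).Balanced)
    (h₁max : ∀ S : Set V, (G.induce S).Balanced → S.ncard ≤ V₁.ncard)
    (h₂bal : (G.induce V₂).Balanced)
    (h₂max : ∀ S : Set V, (G.induce S).Balanced →
      (G.induce S).numEdges ≤ (G.induce V₂).numEdges) :
    (V₁.ncard : ℝ) / (Δ : ℝ) ≤ (V₂.ncard : ℝ) := by
  classical
  have hΔpos : (0 : ℝ) < (Δ : ℝ) := by exact_mod_cast hΔ
  have hne : V₂.Nonempty := by
    obtain ⟨v⟩ := h₂bal.1.nonempty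
    exact ⟨v.1, v.2⟩
  have hn2 : 1 ≤ V₂.ncard := by
    have := (Set.ncard_pos (Set.toFinite V₂)).mpr hne
    omega
  have hm1 : V₁.ncard ≤ (G.induce V₁).numEdges + 1 := card_le_numEdges G V₁ h₁bal
  have hm12 : (G.induce V₁).numEdges ≤ (G.induce V₂).numEdges := h₂max V₁ h₁bal
  have hdegΔ : ∀ v, G.degree v ≤ Δ := fun v => hΔmax.2 ⟨v, rfl⟩
  have hhand : 2 * (G.induce V₂).numEdges ≤ Δ * V₂.ncard := twice_numEdges_le G V₂ hdegΔ
  have hΔa : Δ ≤ Δ * V₂.ncard := by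
    calc Δ = Δ * 1 := (Nat.mul_one Δ).symm
      _ ≤ Δ * V₂.ncard := Nat.mul_le_mul_left Δ hn2
  have key : V₁.ncard ≤ Δ * V₂.ncard := by
    set a := Δ * V₂.ncard with ha
    omega
  rw [div_le_iff₀ hΔpos]
  have : (V₁.ncard : ℝ) ≤ ((Δ * V₂.ncard : ℕ) : ℝ) := by exact_mod_cast key
  rw [Nat.cast_mul] at this
  linarith
end
end

section
/- Let G be a finite signed graph whose maximum vertex degree Δ (in the underlying graph with edge set E⁺ ∪ E⁻) satisfies Δ ≥ 1, and let β ∈ (0, 1]. Suppose G₁ = G[V₁] is an induced subgraph of G that is balanced under β-tolerance and has the maximum number of vertices among all induced subgraphs of G balanced under β-tolerance, and G₂ = G[V₂] is an induced subgraph of G that is balanced under β-tolerance and has the maximum number of edges among all induced subgraphs of G balanced under β-tolerance. Then |V₂| ≥ |V₁| / Δ; that is, the solution to the edge-maximization problem TMBS-E is a (1/Δ)-approximation for the vertex-maximization problem TMBS-V. -/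
noncomputable section

open SimpleGraph in
private lemma conn_card_le' {W : Type*} [Fintype W] (H : SimpleGraph W) (h : H.Connected) :
    Fintype.card W ≤ H.edgeSet.ncard + 1 := by
  classical
  obtain ⟨r⟩ := h.nonempty
  have key : ∀ v : W, v ≠ r → ∃ w, H.Adj v w ∧ H.dist w r < H.dist v r := by
    intro v hv
    obtain ⟨p, hp⟩ := (h.preconnected v r).exists_walk_length_eq_dist
    cases p with
    | nil => exact absurd rfl hv
    | cons hadj q =>
      refine ⟨_, hadj, ?_⟩
      have h1 := H.dist_le q
      simp only [Walk.length_cons] at hp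
      omega
  set A : Set W := {v | v ≠ r} with hA
  set g : W → Sym2 W := fun v =>
    if hv : v ≠ r then s(v, Classical.choose (key v hv)) else s(r, r) with hg
  have hspec : ∀ v (hv : v ≠ r), H.Adj v (Classical.choose (key v hv)) ∧
      H.dist (Classical.choose (key v hv)) r < H.dist v r :=
    fun v hv => Classical.choose_spec (key v hv)
  have hsub : g '' A ⊆ H.edgeSet := by
    rintro e ⟨v, hv, rfl⟩
    have hv' : v ≠ r := hv
    simp only [hg, dif_pos hv']
    exact H.mem_edgeSet.mpr (hspec v hv').1
  have hinj : Set.InjOn g A := by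
    intro v₁ h₁ v₂ h₂ he
    have h₁' : v₁ ≠ r := h₁
    have h₂' : v₂ ≠ r := h₂
    simp only [hg, dif_pos h₁', dif_pos h₂', Sym2.eq_iff] at he
    rcases he with ⟨h, -⟩ | ⟨ha, hb⟩
    · exact h
    · exfalso
      have l1 := (hspec v₁ h₁').2
      have l2 := (hspec v₂ h₂').2
      rw [← ha] at l2
      rw [hb] at l1
      omega
  have hle : A.ncard ≤ H.edgeSet.ncard := by
    calc A.ncard = (g '' A).ncard := (Set.ncard_image_of_injOn hinj).symm
    _ ≤ H.edgeSet.ncard := Set.ncard_le_ncard hsub (Set.toFinite _)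
  have hins : insert r A = Set.univ := by
    ext v; simp [hA, em]
  have hcard : A.ncard + 1 = Fintype.card W := by
    rw [← Nat.card_eq_fintype_card, ← Set.ncard_univ, ← hins,
      Set.ncard_insert_of_notMem (by simp [hA]) (Set.toFinite _)]
  omega

open SimpleGraph in
private lemma handshake_bound' {W : Type*} [Fintype W] (H : SimpleGraph W)
    [DecidableRel H.Adj] (D : ℕ) (hd : ∀ v, H.degree v ≤ D) :
    2 * H.edgeSet.ncard ≤ D * Fintype.card W := by
  classical
  have h1 : ∑ v, H.degree v = 2 * H.edgeFinset.card := H.sum_degrees_eq_twice_card_edges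
  have h2 : H.edgeSet.ncard = H.edgeFinset.card := by
    rw [Set.ncard_eq_toFinset_card']
    congr 1
  have h3 : ∑ v, H.degree v ≤ D * Fintype.card W := by
    calc ∑ v, H.degree v ≤ ∑ _v : W, D := Finset.sum_le_sum (fun v _ => hd v)
    _ = D * Fintype.card W := by rw [Finset.sum_const, Finset.card_univ, smul_eq_mul, mul_comm]
  omega

private lemma SignedGraph.underlying_edgeSet' {V : Type*} (G : SignedGraph V) :
    G.underlying.edgeSet = G.edges := by
  rw [SignedGraph.underlying, SimpleGraph.edgeSet_fromEdgeSet]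
  ext e
  simp only [Set.mem_diff, Set.mem_setOf_eq]
  exact ⟨fun h => h.1, fun h => ⟨h, G.loopless e h⟩⟩

private lemma SignedGraph.degree_induce_le' {V : Type*} [Fintype V] [DecidableEq V]
    (G : SignedGraph V) (S : Set V) (v : S) [Fintype S]
    [DecidableRel (G.induce S).underlying.Adj] [DecidableEq S] :
    (G.induce S).underlying.degree v ≤ G.degree (v : V) := by
  let H := (G.induce S).underlying
  have h1 := SimpleGraph.card_incidenceSet_eq_degree (G := H) (v := v)
  have h2 : (H.incidenceSet v).ncard = H.degree v := by
    rw [← h1]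
    exact (Set.ncard_eq_toFinset_card' _).trans (Set.toFinset_card _)
  set m : Sym2 S → Sym2 V := Sym2.map (Subtype.val) with hm
  have hsub : m '' (H.incidenceSet v) ⊆ {e ∈ G.edges | (v : V) ∈ e} := by
    rintro e ⟨f, hf, rfl⟩
    obtain ⟨hf1, hf2⟩ := hf
    constructor
    · have : f ∈ (G.induce S).edges := by
        rw [← SignedGraph.underlying_edgeSet']
        exact hf1
      rcases this with h | h
      · exact Or.inl h
      · exact Or.inr h
    · exact Sym2.mem_map.mpr ⟨v, hf2, rfl⟩
  have hinj : Set.InjOn m (H.incidenceSet v) :=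
    (Sym2.map.injective Subtype.val_injective).injOn
  have hfin : ({e ∈ G.edges | (v : V) ∈ e}).Finite :=
    G.finite.subset (fun e he => he.1)
  calc (G.induce S).underlying.degree v = (H.incidenceSet v).ncard := h2.symm
  _ = (m '' (H.incidenceSet v)).ncard := (Set.ncard_image_of_injOn hinj).symm
  _ ≤ ({e ∈ G.edges | (v : V) ∈ e}).ncard := Set.ncard_le_ncard hsub hfin
  _ = G.degree (v : V) := rfl

/-- If `Δ ≥ 1` is the maximum vertex degree of a finite signed
graph `G`, `β ∈ (0,1]`, `G[V₁]` is an induced subgraph balanced under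
`β`-tolerance with the maximum number of vertices, and `G[V₂]` is an induced
subgraph balanced under `β`-tolerance with the maximum number of edges, then
`|V₂| ≥ |V₁|/Δ`: the TMBS-E optimum is a `(1/Δ)`-approximation for TMBS-V. -/
theorem SignedGraph.tmbsE_approx_tmbsV {V : Type*} [Fintype V] (G : SignedGraph V)
    (β : ℝ) (hβ0 : 0 < β) (hβ1 : β ≤ 1)
    (Δ : ℕ) (hΔmax : IsGreatest (Set.range G.degree) Δ) (hΔ : 1 ≤ Δ)
    (V₁ V₂ : Set V)
    (h₁bal : (G.induce V₁).BalancedWithTolerance β)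
    (h₁max : ∀ S : Set V, (G.induce S).BalancedWithTolerance β → S.ncard ≤ V₁.ncard)
    (h₂bal : (G.induce V₂).BalancedWithTolerance β)
    (h₂max : ∀ S : Set V, (G.induce S).BalancedWithTolerance β →
      (G.induce S).numEdges ≤ (G.induce V₂).numEdges) :
    (V₁.ncard : ℝ) / (Δ : ℝ) ≤ (V₂.ncard : ℝ) := by
  classical
  have hcard1 : V₁.ncard = Fintype.card V₁ := by
    rw [← Nat.card_eq_fintype_card, Nat.card_coe_set_eq]
  have hcard2 : V₂.ncard = Fintype.card V₂ := by
    rw [← Nat.card_eq_fintype_card, Nat.card_coe_set_eq]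
  -- |V₁| ≤ m₁ + 1
  have hm1 : V₁.ncard ≤ (G.induce V₁).numEdges + 1 := by
    have := conn_card_le' (G.induce V₁).underlying h₁bal.1
    rw [SignedGraph.underlying_edgeSet'] at this
    rw [hcard1]
    exact this
  -- m₁ ≤ m₂
  have hm12 : (G.induce V₁).numEdges ≤ (G.induce V₂).numEdges := h₂max V₁ h₁bal
  -- 2 m₂ ≤ Δ |V₂|
  have hdeg : ∀ v : V₂, (G.induce V₂).underlying.degree v ≤ Δ := by
    intro v
    exact le_trans (SignedGraph.degree_induce_le' G V₂ v)
      (hΔmax.2 (Set.mem_range_self (v : V)))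
  have h2m2 : 2 * (G.induce V₂).numEdges ≤ Δ * V₂.ncard := by
    have := handshake_bound' (G.induce V₂).underlying Δ hdeg
    rw [SignedGraph.underlying_edgeSet'] at this
    rw [hcard2]
    exact this
  -- |V₂| ≥ 1
  have hn2 : 1 ≤ V₂.ncard := by
    have hne : Nonempty V₂ := h₂bal.1.nonempty
    obtain ⟨v⟩ := hne
    have : V₂.Nonempty := ⟨v, v.2⟩
    exact (Set.ncard_pos V₂.toFinite).mpr this
  have hΔn2 : V₂.ncard ≤ Δ * V₂.ncard := Nat.le_mul_of_pos_left _ hΔ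
  -- combine in ℕ
  have hkey : V₁.ncard ≤ Δ * V₂.ncard := by omega
  rw [div_le_iff₀ (by exact_mod_cast hΔ)]
  calc (V₁.ncard : ℝ) ≤ (Δ * V₂.ncard : ℕ) := by exact_mod_cast hkey
  _ = (V₂.ncard : ℝ) * Δ := by push_cast; ring
end
end
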